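/- Let m ≥ 1 and n be integers with n > 4 + 5/m, let E be the 2×6 integer matrix with rows (4,3,2,1,0,n) and (5,m+5,2m+5,3m+5,4m+5,0), and P = {γ ∈ ℝ_{≥0}^6 : E·γ ⪯ (1,1)}. Then the unique point of P maximizing the coordinate sum is (1/5, 0, 0, 0, 0, 1/(5n)), and its coordinate sum is 1/5 + 1/(5n). -/

import Mathlib

set_option maxHeartbeats 1600000


/-- For integers `m ≥ 1`, `n > 4 + 5/m`, the splitting polytope
`P = {γ ∈ ℝ_{≥0}^6 : 4γ₀+3γ₁+2γ₂+γ₃+nγ₅ ≤ 1, 5γ₀+(m+5)γ₁+(2m+5)γ₂+(3m+5)γ₃+(4m+5)γ₄ ≤ 1}`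
of `(y^5(x+y^m)^4, x^n)` has unique coordinate-sum maximizer `(1/5,0,0,0,0,1/(5n))`,
whose coordinate sum is `1/5 + 1/(5n)`. -/
theorem stmt10 (m n : ℕ) (hm : 1 ≤ m) (hn : (4 : ℝ) + 5 / (m:ℝ) < (n:ℝ)) :
    (((![1/5, 0, 0, 0, 0, 1/(5*(n:ℝ))] : Fin 6 → ℝ) ∈
        {γ : Fin 6 → ℝ | (∀ j, 0 ≤ γ j) ∧
          4 * γ 0 + 3 * γ 1 + 2 * γ 2 + γ 3 + (n:ℝ) * γ 5 ≤ 1 ∧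
          5 * γ 0 + ((m:ℝ)+5) * γ 1 + (2*(m:ℝ)+5) * γ 2 + (3*(m:ℝ)+5) * γ 3
            + (4*(m:ℝ)+5) * γ 4 ≤ 1}) ∧
      (∀ γ ∈ {γ : Fin 6 → ℝ | (∀ j, 0 ≤ γ j) ∧
          4 * γ 0 + 3 * γ 1 + 2 * γ 2 + γ 3 + (n:ℝ) * γ 5 ≤ 1 ∧
          5 * γ 0 + ((m:ℝ)+5) * γ 1 + (2*(m:ℝ)+5) * γ 2 + (3*(m:ℝ)+5) * γ 3
            + (4*(m:ℝ)+5) * γ 4 ≤ 1},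
        (∑ j, γ j ≤ 1/5 + 1/(5*(n:ℝ))) ∧
          (∑ j, γ j = 1/5 + 1/(5*(n:ℝ)) →
            γ = (![1/5, 0, 0, 0, 0, 1/(5*(n:ℝ))] : Fin 6 → ℝ))) ∧
      (∑ j, (![1/5, 0, 0, 0, 0, 1/(5*(n:ℝ))] : Fin 6 → ℝ) j = 1/5 + 1/(5*(n:ℝ)))) := by
  have hM : (1:ℝ) ≤ (m:ℝ) := by exact_mod_cast hm
  have hM0 : (0:ℝ) < (m:ℝ) := by linarith
  have hN4 : (4:ℝ) < (n:ℝ) := by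
    have : (0:ℝ) < 5 / (m:ℝ) := by positivity
    linarith
  have hN : (5:ℝ) ≤ (n:ℝ) := by
    have h4 : 4 < n := by exact_mod_cast hN4
    exact_mod_cast h4
  have hN0 : (0:ℝ) < (n:ℝ) := by linarith
  have hN0' : (n:ℝ) ≠ 0 := ne_of_gt hN0
  have hk : 4*(m:ℝ) + 5 < (m:ℝ)*(n:ℝ) := by
    have h1 : (5:ℝ)/(m:ℝ) < (n:ℝ) - 4 := by linarith
    have h2 : (5:ℝ) < ((n:ℝ) - 4) * (m:ℝ) := (div_lt_iff₀ hM0).mp h1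
    nlinarith
  have e0 : (![1/5, 0, 0, 0, 0, 1/(5*(n:ℝ))] : Fin 6 → ℝ) 0 = 1/5 := rfl
  have e1 : (![1/5, 0, 0, 0, 0, 1/(5*(n:ℝ))] : Fin 6 → ℝ) 1 = 0 := rfl
  have e2 : (![1/5, 0, 0, 0, 0, 1/(5*(n:ℝ))] : Fin 6 → ℝ) 2 = 0 := rfl
  have e3 : (![1/5, 0, 0, 0, 0, 1/(5*(n:ℝ))] : Fin 6 → ℝ) 3 = 0 := rfl
  have e4 : (![1/5, 0, 0, 0, 0, 1/(5*(n:ℝ))] : Fin 6 → ℝ) 4 = 0 := rfl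
  have e5 : (![1/5, 0, 0, 0, 0, 1/(5*(n:ℝ))] : Fin 6 → ℝ) 5 = 1/(5*(n:ℝ)) := rfl
  have hNinv : (n:ℝ) * (1/(5*(n:ℝ))) = 1/5 := by field_simp
  refine ⟨⟨?_, ?_, ?_⟩, ?_, ?_⟩
  · intro j
    fin_cases j
    · show (0:ℝ) ≤ 1/5; norm_num
    · show (0:ℝ) ≤ 0; norm_num
    · show (0:ℝ) ≤ 0; norm_num
    · show (0:ℝ) ≤ 0; norm_num
    · show (0:ℝ) ≤ 0; norm_num
    · show (0:ℝ) ≤ 1/(5*(n:ℝ)); positivity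
  · rw [e0, e1, e2, e3, e5]
    rw [hNinv]; norm_num
  · rw [e0, e1, e2, e3, e4]
    norm_num
  · intro γ hγ
    obtain ⟨hpos, hA, hB⟩ := hγ
    have h0 := hpos 0
    have h1 := hpos 1
    have h2 := hpos 2
    have h3 := hpos 3
    have h4 := hpos 4
    have h5 := hpos 5
    have hsum : ∑ j, γ j = γ 0 + γ 1 + γ 2 + γ 3 + γ 4 + γ 5 := by
      simp [Fin.sum_univ_six]
    have hBscaled : ((n:ℝ)-4) * (5 * γ 0 + ((m:ℝ)+5) * γ 1 + (2*(m:ℝ)+5) * γ 2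
        + (3*(m:ℝ)+5) * γ 3 + (4*(m:ℝ)+5) * γ 4) ≤ ((n:ℝ)-4) * 1 :=
      mul_le_mul_of_nonneg_left hB (by linarith)
    have key : 5*(n:ℝ)*(γ 0 + γ 1 + γ 2 + γ 3 + γ 4 + γ 5)
        + ((m:ℝ)*(n:ℝ)-4*(m:ℝ)-5)*(γ 1 + 2*γ 2 + 3*γ 3 + 4*γ 4) ≤ (n:ℝ)+1 := by
      have eqid : 5*(n:ℝ)*(γ 0 + γ 1 + γ 2 + γ 3 + γ 4 + γ 5)
          + ((m:ℝ)*(n:ℝ)-4*(m:ℝ)-5)*(γ 1 + 2*γ 2 + 3*γ 3 + 4*γ 4)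
          = 5*(4 * γ 0 + 3 * γ 1 + 2 * γ 2 + γ 3 + (n:ℝ) * γ 5)
            + ((n:ℝ)-4) * (5 * γ 0 + ((m:ℝ)+5) * γ 1 + (2*(m:ℝ)+5) * γ 2
              + (3*(m:ℝ)+5) * γ 3 + (4*(m:ℝ)+5) * γ 4) := by ring
      rw [eqid]
      nlinarith [hBscaled, hA]
    have hslack : 0 ≤ ((m:ℝ)*(n:ℝ)-4*(m:ℝ)-5)*(γ 1 + 2*γ 2 + 3*γ 3 + 4*γ 4) := by
      apply mul_nonneg (by linarith)
      linarith
    have hbound : γ 0 + γ 1 + γ 2 + γ 3 + γ 4 + γ 5 ≤ 1/5 + 1/(5*(n:ℝ)) := by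
      rw [show (1:ℝ)/5 + 1/(5*(n:ℝ)) = ((n:ℝ)+1)/(5*(n:ℝ)) by field_simp; try ring]
      rw [le_div_iff₀ (by positivity)]
      nlinarith [key, hslack]
    constructor
    · rw [hsum]; exact hbound
    · intro heq
      rw [hsum] at heq
      have heq' : 5*(n:ℝ)*(γ 0 + γ 1 + γ 2 + γ 3 + γ 4 + γ 5) = (n:ℝ)+1 := by
        rw [heq]; field_simp; try ring
      have hz : γ 1 + 2*γ 2 + 3*γ 3 + 4*γ 4 ≤ 0 := by
        have hk2 : 0 < (m:ℝ)*(n:ℝ)-4*(m:ℝ)-5 := by linarith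
        nlinarith [key, heq']
      have hb : γ 1 = 0 := le_antisymm (by linarith) h1
      have hc : γ 2 = 0 := le_antisymm (by linarith) h2
      have hd : γ 3 = 0 := le_antisymm (by linarith) h3
      have he : γ 4 = 0 := le_antisymm (by linarith) h4
      simp only [hb, hc, hd, he] at hA hB heq'
      have hA1 : 4 * γ 0 + (n:ℝ) * γ 5 ≤ 1 := by linarith
      have hB1 : 5 * γ 0 ≤ 1 := by linarith
      have heq2 : 5*(n:ℝ)*γ 0 + 5*(n:ℝ)*γ 5 = (n:ℝ)+1 := by linarith [heq']
      have hge : ((n:ℝ)-4) * (5*γ 0) ≥ (n:ℝ)-4 := by nlinarith [hA1, heq2]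
      have hle : ((n:ℝ)-4) * (5*γ 0) ≤ ((n:ℝ)-4) * 1 :=
        mul_le_mul_of_nonneg_left hB1 (by linarith)
      have ha : γ 0 = 1/5 := by
        have h5a : ((n:ℝ)-4) * (5*γ 0) = ((n:ℝ)-4) * 1 := le_antisymm hle (by linarith)
        have := mul_left_cancel₀ (show (n:ℝ)-4 ≠ 0 by linarith) h5a
        linarith
      have hf : γ 5 = 1/(5*(n:ℝ)) := by
        rw [ha] at heq2
        have hnf : 5*(n:ℝ)*γ 5 = 1 := by linarith
        field_simp
        linarith
      funext i
      fin_cases i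
      · exact ha
      · exact hb
      · exact hc
      · exact hd
      · exact he
      · exact hf
  · rw [Fin.sum_univ_six, e0, e1, e2, e3, e4, e5]
    norm_num
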